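/- arXiv:1804.02322 — 10 statements merged into one kernel-verified Lean document; each statement's English description precedes it below -/
import Mathlib

section
/- In any Tarski algebra, the relation defined by a ≤ b iff a·b = 1 is a partial order with greatest element 1, and for all a, b the element (a·b)·b is the least upper bound of a and b with respect to ≤ (so a Tarski algebra is a join-semilattice with top under this order). -/
/-- In any Tarski algebra, `a ≤ b ↔ a·b = 1` is a partial order with greatest
element `1`, and `(a·b)·b` is the least upper bound of `a` and `b`. -/
theorem tarski_join_semilattice {α : Type*} (op : α → α → α) (one : α)
    (T1 : ∀ a, op one a = a) (T2 : ∀ a, op a a = one)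
    (T3 : ∀ a b c, op a (op b c) = op (op a b) (op a c))
    (T4 : ∀ a b, op (op a b) b = op (op b a) a) :
    let le : α → α → Prop := fun a b => op a b = one
    (∀ a, le a a) ∧
    (∀ a b, le a b → le b a → a = b) ∧
    (∀ a b c, le a b → le b c → le a c) ∧
    (∀ a, le a one) ∧
    (∀ a b, le a (op (op a b) b) ∧ le b (op (op a b) b) ∧
      ∀ c, le a c → le b c → le (op (op a b) b) c) := by
  intro le
  -- a · 1 = 1
  have h1 : ∀ a, op a one = one := by
    intro a
    calc op a one = op a (op a a) := by rw [T2]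
    _ = op (op a a) (op a a) := by rw [T3]
    _ = one := T2 _
  -- x · (a · x) = 1
  have hx : ∀ x a, op x (op a x) = one := by
    intro x a
    rw [T3, T2, h1]
  -- antitone in first argument: a ≤ b → b·d ≤ a·d
  have hanti : ∀ a b d, op a b = one → op (op b d) (op a d) = one := by
    intro a b d hab
    have : op a d = op a (op b d) := by rw [T3, hab, T1]
    rw [this]
    exact hx _ _
  refine ⟨fun a => T2 a, ?_, ?_, fun a => h1 a, ?_⟩
  · -- antisymmetry
    intro a b hab hba
    calc a = op one a := (T1 a).symm
    _ = op (op b a) a := by rw [hba]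
    _ = op (op a b) b := (T4 a b).symm
    _ = op one b := by rw [hab]
    _ = b := T1 b
  · -- transitivity
    intro a b c hab hbc
    have : op a (op b c) = op (op a b) (op a c) := T3 a b c
    rw [hbc, hab, h1, T1] at this
    exact this.symm
  · intro a b
    refine ⟨?_, ?_, ?_⟩
    · -- a ≤ (a·b)·b
      show op a (op (op a b) b) = one
      rw [T3]
      have : op a (op a b) = op a b := by rw [T3, T2, T1]
      rw [this, T2]
    · -- b ≤ (a·b)·b
      show op b (op (op a b) b) = one
      rw [T4]
      rw [T3]
      have : op b (op b a) = op b a := by rw [T3, T2, T1]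
      rw [this, T2]
    · intro c hac hbc
      show op (op (op a b) b) c = one
      -- from a ≤ c : c·b ≤ a·b
      have h2 : op (op c b) (op a b) = one := hanti a c b hac
      -- from c·b ≤ a·b : (a·b)·b ≤ (c·b)·b
      have h3 : op (op (op a b) b) (op (op c b) b) = one := hanti _ _ b h2
      -- (c·b)·b = (b·c)·c = 1·c = c
      have h4 : op (op c b) b = c := by rw [T4, hbc, T1]
      rw [h4] at h3
      exact h3
end

section
/- Let (X, 𝒮) be a Tarski set with 𝒮 nonempty, and let Δ(X) = {U ⊆ X : there exist W ∈ 𝒮 and H ⊆ W with U = Wᶜ ∪ H}. Then X ∈ Δ(X) and Δ(X) is closed under the operation A·B = Aᶜ ∪ B; consequently (Δ(X), ·, X) satisfies the Tarski algebra axioms T1–T4 (it is a Tarski algebra of sets). -/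
/-- The dual of a Tarski set `(X, 𝒮)`:
`Δ(X) = {U ⊆ X : ∃ W ∈ 𝒮, ∃ H ⊆ W, U = Wᶜ ∪ H}`. -/
def TDelta {X : Type*} (𝒮 : Set (Set X)) : Set (Set X) :=
  {U | ∃ W ∈ 𝒮, ∃ H ⊆ W, U = Wᶜ ∪ H}

/-- For a Tarski set `(X, 𝒮)` with `𝒮` nonempty: `X ∈ Δ(X)`, `Δ(X)` is closed under
`A·B = Aᶜ ∪ B`, and this operation with constant `X` satisfies the Tarski axioms T1–T4. -/
theorem tarskiSet_dual_algebra {X : Type*} [Nonempty X] (𝒮 : Set (Set X))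
    (h𝒮 : 𝒮.Nonempty) :
    Set.univ ∈ TDelta 𝒮 ∧
    (∀ A ∈ TDelta 𝒮, ∀ B ∈ TDelta 𝒮, Aᶜ ∪ B ∈ TDelta 𝒮) ∧
    (∀ A : Set X, Set.univᶜ ∪ A = A) ∧
    (∀ A : Set X, Aᶜ ∪ A = Set.univ) ∧
    (∀ A B C : Set X, Aᶜ ∪ (Bᶜ ∪ C) = (Aᶜ ∪ B)ᶜ ∪ (Aᶜ ∪ C)) ∧
    (∀ A B : Set X, (Aᶜ ∪ B)ᶜ ∪ B = (Bᶜ ∪ A)ᶜ ∪ A) := by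
  obtain ⟨W0, hW0⟩ := h𝒮
  refine ⟨⟨W0, hW0, W0, le_refl _, by simp⟩, ?_, ?_, ?_, ?_, ?_⟩
  · rintro A hA B ⟨V, hV, K, hKV, rfl⟩
    refine ⟨V, hV, V ∩ (Aᶜ ∪ (Vᶜ ∪ K)), Set.inter_subset_left, ?_⟩
    ext x
    by_cases hx : x ∈ V <;> simp [hx] <;> tauto
  · intro A; simp
  · intro A; simp
  · intro A B C; ext x; simp; tauto
  · intro A B; ext x; simp; tauto
end

section
/- In a finite Tarski algebra T, for a filter K the following are equivalent: (i) K is a prime filter; (ii) K is a maximal filter; (iii) there is a coatom x of T such that K = {y ∈ T : ¬(y ≤ x)} (the complement of the principal down-set of x). -/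
/-- A filter (deductive system) of a Tarski algebra: contains `one` and closed
under modus ponens. -/
def IsTFilter {α : Type*} (op : α → α → α) (one : α) (K : Set α) : Prop :=
  one ∈ K ∧ ∀ a b : α, a ∈ K → op a b ∈ K → b ∈ K

/-- The induced order of a Tarski algebra: `a ≤ b` iff `a·b = 1`. -/
def tle {α : Type*} (op : α → α → α) (one : α) (a b : α) : Prop := op a b = one

/-- A prime filter: a proper filter such that `a ∨ b = (a·b)·b ∈ K` implies
`a ∈ K` or `b ∈ K`. -/
def IsPrimeTFilter {α : Type*} (op : α → α → α) (one : α) (K : Set α) : Prop :=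
  IsTFilter op one K ∧ K ≠ Set.univ ∧
    ∀ a b : α, op (op a b) b ∈ K → a ∈ K ∨ b ∈ K

/-- A maximal filter: a proper filter whose only proper extension among filters
is the whole algebra. -/
def IsMaxTFilter {α : Type*} (op : α → α → α) (one : α) (K : Set α) : Prop :=
  IsTFilter op one K ∧ K ≠ Set.univ ∧
    ∀ F : Set α, IsTFilter op one F → K ⊆ F → F = K ∨ F = Set.univ

/-- A coatom: a maximal element of `T \ {1}` with respect to the induced order. -/
def IsTCoatom {α : Type*} (op : α → α → α) (one : α) (x : α) : Prop :=
  x ≠ one ∧ ∀ y : α, tle op one x y → y = x ∨ y = one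

/-- In a finite Tarski algebra, a filter is prime iff it is maximal iff it is
the complement of the principal down-set of some coatom. -/
theorem finite_tarski_prime_iff_maximal {α : Type*} [Finite α]
    (op : α → α → α) (one : α)
    (T1 : ∀ a, op one a = a) (T2 : ∀ a, op a a = one)
    (T3 : ∀ a b c, op a (op b c) = op (op a b) (op a c))
    (T4 : ∀ a b, op (op a b) b = op (op b a) a)
    (K : Set α) (hK : IsTFilter op one K) :
    (IsPrimeTFilter op one K ↔ IsMaxTFilter op one K) ∧
    (IsPrimeTFilter op one K ↔
      ∃ x : α, IsTCoatom op one x ∧ K = {y : α | ¬ tle op one y x}) := by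
  classical
  have L1 : ∀ a, op a one = one := by
    intro a
    conv_lhs => rw [← T2 a]
    rw [T3, T2]
  have L2 : ∀ a b, op a (op a b) = op a b := by
    intro a b; rw [T3, T2, T1]
  have L3 : ∀ a b, op a (op b a) = one := by
    intro a b; rw [T3, T2, L1]
  have ltrans : ∀ a b c, op a b = one → op b c = one → op a c = one := by
    intro a b c hab hbc
    have h := T3 a b c
    rw [hbc, hab, L1, T1] at h
    exact h.symm
  have antisym : ∀ a b, op a b = one → op b a = one → a = b := by
    intro a b hab hba
    calc a = op one a := (T1 a).symm
    _ = op (op b a) a := by rw [hba]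
    _ = op (op a b) b := T4 b a
    _ = op one b := by rw [hab]
    _ = b := T1 b
  have up : ∀ F : Set α, IsTFilter op one F → ∀ a b, a ∈ F → op a b = one → b ∈ F :=
    fun F hF a b ha h => hF.2 a b ha (h ▸ hF.1)
  have jl : ∀ a b, op a (op (op a b) b) = one := by
    intro a b; rw [T3, L2, T2]
  have jr : ∀ a b, op b (op (op a b) b) = one := by
    intro a b; rw [T4, T3, L2, T2]
  -- Maximal → Prime
  have MtoP : IsMaxTFilter op one K → IsPrimeTFilter op one K := by
    rintro ⟨hF, hne, hmax⟩
    refine ⟨hF, hne, ?_⟩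
    intro a b hab
    by_cases ha : a ∈ K
    · exact Or.inl ha
    right
    have hFfil : IsTFilter op one {y | op a y ∈ K} := by
      constructor
      · show op a one ∈ K
        rw [L1]; exact hF.1
      · intro p q hp hpq
        have hpq' : op (op a p) (op a q) ∈ K := by
          rw [← T3]; exact hpq
        exact hF.2 (op a p) (op a q) hp hpq'
    have hKF : K ⊆ {y | op a y ∈ K} := fun k hk => up K hF k (op a k) hk (L3 k a)
    rcases hmax {y | op a y ∈ K} hFfil hKF with h | h
    · have haF : a ∈ {y | op a y ∈ K} := by
        show op a a ∈ K; rw [T2]; exact hF.1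
      rw [h] at haF
      exact absurd haF ha
    · have hb' : op a b ∈ K := by
        have : b ∈ {y | op a y ∈ K} := by rw [h]; trivial
        exact this
      exact hF.2 (op a b) b hb' hab
  -- Coatom description → Maximal
  have CtoM : (∃ x : α, IsTCoatom op one x ∧ K = {y : α | ¬ tle op one y x}) →
      IsMaxTFilter op one K := by
    rintro ⟨x, ⟨hx1, _⟩, hKeq⟩
    refine ⟨hK, ?_, ?_⟩
    · intro h
      have hx : x ∈ K := by rw [h]; trivial
      rw [hKeq] at hx
      exact hx (T2 x)
    · intro F hFf hKF
      by_cases hFK : F = K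
      · exact Or.inl hFK
      right
      obtain ⟨a, haF, haK⟩ : ∃ a, a ∈ F ∧ a ∉ K := by
        by_contra hcon
        push_neg at hcon
        exact hFK (Set.Subset.antisymm hcon hKF)
      have hax : op a x = one := by
        rw [hKeq] at haK
        simp only [Set.mem_setOf_eq, not_not] at haK
        exact haK
      have hxF : x ∈ F := up F hFf a x haF hax
      have key : ∀ y, op (op x y) x ≠ one := by
        intro y hcon
        apply hx1
        have h1 : op (op x (op x y)) (op x y) = one := by rw [L2, T2]
        rw [T4, hcon, T1] at h1
        exact h1
      apply Set.eq_univ_of_forall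
      intro y
      by_cases hyx : op y x = one
      · have h1 : op x y ∈ K := by rw [hKeq]; exact key y
        have h2 : op (op x y) y = x := by rw [T4, hyx, T1]
        refine hFf.2 (op x y) y (hKF h1) ?_
        rw [h2]
        exact hxF
      · exact hKF (by rw [hKeq]; exact hyx)
  -- Prime → Coatom description
  have PtoC : IsPrimeTFilter op one K →
      ∃ x : α, IsTCoatom op one x ∧ K = {y : α | ¬ tle op one y x} := by
    rintro ⟨hF, hne, hpr⟩
    have hjoin : ∀ a b, a ∉ K → b ∉ K → op (op a b) b ∉ K := fun a b ha hb h =>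
      (hpr a b h).elim ha hb
    have exub : ∀ s : Finset α, (∀ y ∈ s, y ∉ K) → s.Nonempty →
        ∃ x, x ∉ K ∧ ∀ y ∈ s, op y x = one := by
      intro s
      induction s using Finset.induction_on with
      | empty => intro _ h; simp at h
      | @insert a t hat ih =>
        intro hsub _
        by_cases ht : t.Nonempty
        · obtain ⟨x, hx, hxall⟩ := ih (fun y hy => hsub y (Finset.mem_insert_of_mem hy)) ht
          have haK : a ∉ K := hsub a (Finset.mem_insert_self a t)
          refine ⟨op (op a x) x, hjoin a x haK hx, ?_⟩
          intro y hy
          rcases Finset.mem_insert.1 hy with rfl | hy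
          · exact jl y x
          · exact ltrans y x _ (hxall y hy) (jr a x)
        · rw [Finset.not_nonempty_iff_eq_empty] at ht
          subst ht
          refine ⟨a, hsub a (Finset.mem_insert_self a ∅), fun y hy => ?_⟩
          rcases Finset.mem_insert.1 hy with rfl | hy
          · exact T2 y
          · simp at hy
    have hcfin : (Kᶜ : Set α).Finite := Set.toFinite _
    have hcne : (hcfin.toFinset).Nonempty := by
      obtain ⟨a, ha⟩ : ∃ a, a ∉ K := by
        by_contra h
        push_neg at h
        exact hne (Set.eq_univ_of_forall h)
      exact ⟨a, hcfin.mem_toFinset.2 ha⟩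
    obtain ⟨x, hxK, hxub⟩ := exub hcfin.toFinset
      (fun y hy => hcfin.mem_toFinset.1 hy) hcne
    have hxub' : ∀ y, y ∉ K → op y x = one := fun y hy =>
      hxub y (hcfin.mem_toFinset.2 hy)
    have hKeq : K = {y : α | ¬ tle op one y x} := by
      ext y
      simp only [Set.mem_setOf_eq]
      constructor
      · intro hyK hyx
        exact hxK (up K hF y x hyK hyx)
      · intro h
        by_contra hyK
        exact h (hxub' y hyK)
    refine ⟨x, ⟨?_, ?_⟩, hKeq⟩
    · intro h
      exact hxK (h ▸ hF.1)
    · intro y hxy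
      by_cases hyx : op y x = one
      · exact Or.inl (antisym y x hyx hxy)
      right
      have hyK : y ∈ K := by rw [hKeq]; exact hyx
      have h1 : op y x ∉ K := fun h => hxK (hF.2 y x hyK h)
      have h1' : op (op y x) x = one := by
        rw [hKeq] at h1
        simp only [Set.mem_setOf_eq, not_not] at h1
        exact h1
      have h2 : op y x = x := antisym (op y x) x h1' (L3 x y)
      have h3 := T4 x y
      rw [hxy, T1, h2, T2] at h3
      exact h3
  exact ⟨⟨fun h => CtoM (PtoC h), MtoP⟩, ⟨PtoC, fun h => MtoP (CtoM h)⟩⟩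
end

section
/- Let T be a finite Tarski algebra and Spec(T) its set of maximal (equivalently prime) filters. Then the map σ : T → 𝒫(Spec(T)) defined by σ(x) = {K ∈ Spec(T) : x ∈ K} is injective and satisfies σ(1) = Spec(T) and σ(a·b) = σ(a)ᶜ ∪ σ(b) for all a, b ∈ T; that is, σ is an embedding of T into the Tarski algebra of sets on 𝒫(Spec(T)). -/
section Aux

variable {α : Type*} (op : α → α → α) (one : α)
variable (T1 : ∀ a, op one a = a) (T2 : ∀ a, op a a = one)
variable (T3 : ∀ a b c, op a (op b c) = op (op a b) (op a c))
variable (T4 : ∀ a b, op (op a b) b = op (op b a) a)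

include T2 T3 in
lemma tarski_op_one : ∀ a, op a one = one := by
  intro a
  have h : op a (op a a) = op (op a a) (op a a) := T3 a a a
  rw [T2, T2] at h
  exact h

include T1 T2 T3 in
lemma tarski_idem : ∀ a b, op a (op a b) = op a b := by
  intro a b
  rw [T3, T2, T1]

include T1 T2 T3 in
lemma tarski_weaken : ∀ a b, op a (op b a) = one := by
  intro a b
  rw [T3, T2, tarski_op_one op one T2 T3]

include T1 T4 in
lemma tarski_antisymm : ∀ a b, op a b = one → op b a = one → a = b := by
  intro a b h1 h2
  have := T4 a b
  rw [h1, h2, T1, T1] at this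
  exact this.symm

include T1 T2 T3 in
lemma tarski_ext_filter {K : Set α} (hK : IsTFilter op one K) (b : α) :
    IsTFilter op one {x | op b x ∈ K} ∧ K ⊆ {x | op b x ∈ K} ∧
      b ∈ {x | op b x ∈ K} := by
  obtain ⟨h1, hmp⟩ := hK
  refine ⟨⟨?_, ?_⟩, ?_, ?_⟩
  · show op b one ∈ K
    rw [tarski_op_one op one T2 T3]; exact h1
  · intro x y hx hxy
    show op b y ∈ K
    have : op b (op x y) = op (op b x) (op b y) := T3 b x y
    have hxy' : op b (op x y) ∈ K := hxy
    rw [this] at hxy'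
    exact hmp _ _ hx hxy' 
  · intro x hx
    show op b x ∈ K
    have : op x (op b x) = one := tarski_weaken op one T1 T2 T3 x b
    exact hmp _ _ hx (this ▸ h1)
  · show op b b ∈ K
    rw [T2]; exact h1

include T1 T2 T3 T4 in
lemma tarski_max_avoid {K : Set α} (hK : IsTFilter op one K) {b : α} (hb : b ∉ K)
    (hmax : ∀ F : Set α, IsTFilter op one F → K ⊆ F → b ∉ F → F = K) :
    IsMaxTFilter op one K := by
  -- claim A : for c ∉ K, op c b ∈ K
  have claimA : ∀ c, c ∉ K → op c b ∈ K := by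
    intro c hc
    obtain ⟨hF, hKF, hcF⟩ := tarski_ext_filter op one T1 T2 T3 hK c
    by_contra hbF
    have := hmax _ hF hKF hbF
    rw [this] at hcF
    exact hc hcF
  -- claim B : for all y, op b y ∈ K
  have claimB : ∀ y, op b y ∈ K := by
    intro y
    by_contra h
    have h1 : op (op b y) b ∈ K := claimA _ h
    have h2 : op (op (op b y) b) b = one := by
      rw [T4, tarski_idem op one T1 T2 T3, T2]
    exact hb (hK.2 _ _ h1 (h2 ▸ hK.1))
  refine ⟨hK, ?_, ?_⟩
  · intro h
    exact hb (h ▸ Set.mem_univ b)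
  · intro F hF hKF
    by_cases hFK : F = K
    · exact Or.inl hFK
    · right
      have : ∃ c, c ∈ F ∧ c ∉ K := by
        by_contra h
        push_neg at h
        exact hFK (Set.Subset.antisymm h hKF)
      obtain ⟨c, hcF, hcK⟩ := this
      have hbF : b ∈ F := hF.2 c b hcF (hKF (claimA c hcK))
      ext y
      simp only [Set.mem_univ, iff_true]
      exact hF.2 b y hbF (hKF (claimB y))

include T1 T2 T3 T4 in
lemma tarski_exists_max [Finite α] {a b : α} (hab : op a b ≠ one) :
    ∃ K : Set α, IsMaxTFilter op one K ∧ a ∈ K ∧ b ∉ K := by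
  set P : Set α := {x | op a x = one} with hP
  have hPfil : IsTFilter op one P := by
    constructor
    · exact tarski_op_one op one T2 T3 a
    · intro x y hx hxy
      have : op a (op x y) = op (op a x) (op a y) := T3 a x y
      rw [hx, T1] at this
      show op a y = one
      rw [← this]; exact hxy
  set S : Set (Set α) := {F | IsTFilter op one F ∧ P ⊆ F ∧ b ∉ F} with hS
  have hSfin : S.Finite := Set.toFinite S
  have hSne : S.Nonempty := ⟨P, hPfil, subset_refl _, hab⟩
  obtain ⟨K, hKS, hKmax⟩ := Set.Finite.exists_maximalFor id S hSfin hSne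
  obtain ⟨hKfil, hPK, hbK⟩ := hKS
  refine ⟨K, ?_, hPK (T2 a), hbK⟩
  apply tarski_max_avoid op one T1 T2 T3 T4 hKfil hbK
  intro F hF hKF hbF
  exact Set.Subset.antisymm (hKmax ⟨hF, hPK.trans hKF, hbF⟩ hKF) hKF

end Aux

/-- For a finite Tarski algebra `T`, the map `σ : T → 𝒫(Spec T)`,
`σ(x) = {K ∈ Spec T : x ∈ K}`, is injective, sends `1` to `Spec T`, and satisfies
`σ(a·b) = σ(a)ᶜ ∪ σ(b)`: an embedding into the Tarski algebra of sets. -/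
theorem finite_tarski_spec_embedding {α : Type*} [Finite α]
    (op : α → α → α) (one : α)
    (T1 : ∀ a, op one a = a) (T2 : ∀ a, op a a = one)
    (T3 : ∀ a b c, op a (op b c) = op (op a b) (op a c))
    (T4 : ∀ a b, op (op a b) b = op (op b a) a) :
    let Spec := {K : Set α // IsMaxTFilter op one K}
    let σ : α → Set Spec := fun x => {K : Spec | x ∈ K.1}
    Function.Injective σ ∧
    σ one = Set.univ ∧
    (∀ a b : α, σ (op a b) = (σ a)ᶜ ∪ σ b) := by
  intro Spec σ
  -- membership characterization in a maximal filter
  have key : ∀ (K : Set α), IsMaxTFilter op one K → ∀ a b : α,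
      (op a b ∈ K ↔ (a ∉ K ∨ b ∈ K)) := by
    intro K hK a b
    constructor
    · intro h
      by_cases ha : a ∈ K
      · exact Or.inr (hK.1.2 a b ha h)
      · exact Or.inl ha
    · rintro (ha | hb)
      · -- a ∉ K : extension filter by a is univ
        obtain ⟨hF, hKF, haF⟩ := tarski_ext_filter op one T1 T2 T3 hK.1 a
        rcases hK.2.2 _ hF hKF with h | h
        · exact absurd (h ▸ haF) ha
        · have : b ∈ {x | op a x ∈ K} := h ▸ Set.mem_univ b
          exact this
      · have h1 : op b (op a b) = one := tarski_weaken op one T1 T2 T3 b a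
        exact hK.1.2 b (op a b) hb (h1 ▸ hK.1.1)
  have sep : ∀ a b : α, op a b ≠ one → σ a ≠ σ b := by
    intro a b hab h
    obtain ⟨K, hK, haK, hbK⟩ := tarski_exists_max op one T1 T2 T3 T4 hab
    have : (⟨K, hK⟩ : Spec) ∈ σ a := haK
    rw [h] at this
    exact hbK this
  refine ⟨?_, ?_, ?_⟩
  · intro a b h
    by_contra hne
    by_cases h1 : op a b = one
    · by_cases h2 : op b a = one
      · exact hne (tarski_antisymm op one T1 T4 a b h1 h2)
      · exact sep b a h2 h.symm
    · exact sep a b h1 h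
  · ext K
    simp only [Set.mem_univ, iff_true]
    exact K.2.1.1
  · intro a b
    ext K
    simp only [σ, Set.mem_setOf_eq, Set.mem_union, Set.mem_compl_iff]
    exact key K.1 K.2 a b
end

section
/- Let (X, 𝒮) be a finite dense Tarski set (a finite covering approximation space, i.e., ⋃𝒮 = X and 𝒮 nonempty). Then the map ξ : X → Spec(Δ(X)) defined by ξ(x) = {U ∈ Δ(X) : x ∈ U} is well defined (each ξ(x) is a maximal proper filter of the Tarski algebra Δ(X)) and is a bijection of X onto Spec(Δ(X)). -/
/-- A filter of the Tarski algebra of sets `Δ` (with operation `A·B = Aᶜ ∪ B`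
and constant `X = univ`): a subset of `Δ` containing `univ` and closed under
modus ponens within `Δ`. -/
def IsDFilter {X : Type*} (Δ : Set (Set X)) (K : Set (Set X)) : Prop :=
  K ⊆ Δ ∧ Set.univ ∈ K ∧ ∀ A ∈ K, ∀ B ∈ Δ, Aᶜ ∪ B ∈ K → B ∈ K

/-- A maximal proper filter of the Tarski algebra `Δ`. -/
def IsMaxDFilter {X : Type*} (Δ : Set (Set X)) (K : Set (Set X)) : Prop :=
  IsDFilter Δ K ∧ K ≠ Δ ∧ ∀ F : Set (Set X), IsDFilter Δ F → K ⊆ F → F = K ∨ F = Δ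

lemma TDelta.union_left {X : Type*} {𝒮 : Set (Set X)} {B : Set X}
    (hB : B ∈ TDelta 𝒮) (S : Set X) : S ∪ B ∈ TDelta 𝒮 := by
  obtain ⟨V, hV, G, hG, rfl⟩ := hB
  refine ⟨V, hV, V ∩ (S ∪ (Vᶜ ∪ G)), Set.inter_subset_left, ?_⟩
  ext y; by_cases hy : y ∈ V <;> simp [hy]

lemma TDelta.univ_mem {X : Type*} {𝒮 : Set (Set X)} (h𝒮 : 𝒮.Nonempty) :
    Set.univ ∈ TDelta 𝒮 := by
  obtain ⟨W, hW⟩ := h𝒮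
  exact ⟨W, hW, W, subset_rfl, (Set.compl_union_self W).symm⟩

lemma TDelta.singleton_compl_mem {X : Type*} {𝒮 : Set (Set X)}
    (hdense : ⋃₀ 𝒮 = Set.univ) (x : X) : {x}ᶜ ∈ TDelta 𝒮 := by
  have hx : x ∈ ⋃₀ 𝒮 := by rw [hdense]; trivial
  obtain ⟨W, hW, hxW⟩ := hx
  refine ⟨W, hW, W \ {x}, Set.diff_subset, ?_⟩
  ext y; by_cases hy : y ∈ W <;> by_cases hxy : y = x <;>
    simp [hy, hxy] <;> simp_all

/-- Iterated modus ponens: a filter is closed under supersets of finite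
intersections of its members (within `Δ`). -/
lemma DFilter.sInter_mp {X : Type*} {𝒮 : Set (Set X)} {K : Set (Set X)}
    (hK : IsDFilter (TDelta 𝒮) K) :
    ∀ T : Set (Set X), T.Finite → T ⊆ K → ∀ B ∈ TDelta 𝒮, ⋂₀ T ⊆ B → B ∈ K := by
  obtain ⟨hKΔ, huniv, hmp⟩ := hK
  intro T hT
  refine Set.Finite.induction_on
    (motive := fun T _ => T ⊆ K → ∀ B ∈ TDelta 𝒮, ⋂₀ T ⊆ B → B ∈ K) T hT ?_ ?_
  · intro _ B hB hsub
    simp only [Set.sInter_empty, Set.univ_subset_iff] at hsub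
    rw [hsub]; exact huniv
  · rintro A T hA hTfin ih hins B hB hsub
    have hAK : A ∈ K := hins (Set.mem_insert _ _)
    have hTK : T ⊆ K := fun u hu => hins (Set.mem_insert_of_mem _ hu)
    have h1 : ⋂₀ T ⊆ Aᶜ ∪ B := by
      intro y hy
      by_cases hyA : y ∈ A
      · right
        apply hsub
        rw [Set.sInter_insert]
        exact ⟨hyA, hy⟩
      · left; exact hyA
    have h2 : Aᶜ ∪ B ∈ TDelta 𝒮 := TDelta.union_left hB Aᶜ
    exact hmp A hAK B hB (ih hTK _ h2 h1)

/-- For a finite dense Tarski set (covering approximation space) `(X, 𝒮)`, the map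
`ξ(x) = {U ∈ Δ(X) : x ∈ U}` is well defined into `Spec(Δ(X))` and is a bijection
of `X` onto `Spec(Δ(X))`. -/
theorem finite_dense_tarskiSet_spec_bijection {X : Type*} [Finite X] [Nonempty X]
    (𝒮 : Set (Set X)) (h𝒮 : 𝒮.Nonempty) (hdense : ⋃₀ 𝒮 = Set.univ) :
    let ξ : X → Set (Set X) := fun x => {U | U ∈ TDelta 𝒮 ∧ x ∈ U}
    (∀ x : X, IsMaxDFilter (TDelta 𝒮) (ξ x)) ∧
    Function.Injective ξ ∧
    (∀ K : Set (Set X), IsMaxDFilter (TDelta 𝒮) K → ∃ x : X, ξ x = K) := by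
  intro ξ
  -- ξ x is a filter
  have hfil : ∀ x : X, IsDFilter (TDelta 𝒮) (ξ x) := by
    intro x
    refine ⟨fun U hU => hU.1, ⟨TDelta.univ_mem h𝒮, trivial⟩, ?_⟩
    rintro A ⟨hAΔ, hxA⟩ B hBΔ ⟨_, hxAB⟩
    exact ⟨hBΔ, hxAB.resolve_left (fun h => h hxA)⟩
  -- ξ x is proper
  have hproper : ∀ x : X, ξ x ≠ TDelta 𝒮 := by
    intro x hEq
    have h1 : ({x}ᶜ : Set X) ∈ ξ x := by
      rw [hEq]; exact TDelta.singleton_compl_mem hdense x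
    exact h1.2 rfl
  -- ξ x is maximal
  have hmax : ∀ x : X, IsMaxDFilter (TDelta 𝒮) (ξ x) := by
    intro x
    refine ⟨hfil x, hproper x, ?_⟩
    intro F hF hsub
    by_cases hFe : F = ξ x
    · exact Or.inl hFe
    · right
      obtain ⟨hFΔ, _, hFmp⟩ := hF
      -- there is U ∈ F with x ∉ U
      have : ∃ U ∈ F, U ∉ ξ x := by
        by_contra h
        push_neg at h
        exact hFe (le_antisymm h hsub)
      obtain ⟨U, hUF, hUx⟩ := this
      have hUΔ : U ∈ TDelta 𝒮 := hFΔ hUF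
      have hxU : x ∉ U := fun h => hUx ⟨hUΔ, h⟩
      apply Set.Subset.antisymm hFΔ
      intro B hB
      have h2 : Uᶜ ∪ B ∈ ξ x := ⟨TDelta.union_left hB Uᶜ, Or.inl hxU⟩
      exact hFmp U hUF B hB (hsub h2)
  refine ⟨hmax, ?_, ?_⟩
  · -- injective
    intro x y hxy
    by_contra hne
    have h1 : ({x}ᶜ : Set X) ∈ ξ y :=
      ⟨TDelta.singleton_compl_mem hdense x, fun h => hne (h.symm)⟩
    rw [← hxy] at h1
    exact h1.2 rfl
  · -- surjective onto Spec
    intro K ⟨hKfil, hKne, hKmax⟩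
    have hKΔ : K ⊆ TDelta 𝒮 := hKfil.1
    -- the intersection of K is nonempty
    have hne : (⋂₀ K).Nonempty := by
      by_contra h
      rw [Set.not_nonempty_iff_eq_empty] at h
      obtain ⟨B, hBΔ, hBK⟩ : ∃ B ∈ TDelta 𝒮, B ∉ K := by
        by_contra hc
        push_neg at hc
        exact hKne (le_antisymm hKΔ hc)
      exact hBK (DFilter.sInter_mp hKfil K (Set.toFinite K) subset_rfl B hBΔ
        (h ▸ Set.empty_subset B))
    obtain ⟨x, hx⟩ := hne
    refine ⟨x, ?_⟩
    have hsub : K ⊆ ξ x := fun U hU => ⟨hKΔ hU, hx U hU⟩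
    rcases hKmax (ξ x) (hfil x) hsub with h | h
    · exact h
    · exact absurd h (hproper x)
end

section
/- Let 𝒞 be a cover of a finite set S. Then 𝒞 is unary (i.e., md(x) is a singleton for every x ∈ S) if and only if for all K₁, K₂ ∈ 𝒞 and every x ∈ K₁ ∩ K₂ there exists K ∈ 𝒞 with x ∈ K and K ⊆ K₁ ∩ K₂. -/
/-- The minimal description of `x` with respect to a cover `𝒞`:
the minimal members of `𝒞` containing `x`. -/
def md {S : Type*} (𝒞 : Set (Set S)) (x : S) : Set (Set S) :=
  {A | A ∈ 𝒞 ∧ x ∈ A ∧ ∀ B ∈ 𝒞, x ∈ B → B ⊆ A → B = A}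

lemma exists_md_subset {S : Type*} [Finite S] (𝒞 : Set (Set S)) (x : S)
    {K : Set S} (hK : K ∈ 𝒞) (hx : x ∈ K) : ∃ A ∈ md 𝒞 x, A ⊆ K := by
  have hfin : ({B | B ∈ 𝒞 ∧ x ∈ B ∧ B ⊆ K} : Set (Set S)).Finite :=
    Set.toFinite _
  obtain ⟨A, hA, hmin⟩ := hfin.exists_minimal ⟨K, hK, hx, subset_rfl⟩
  obtain ⟨hA𝒞, hxA, hAK⟩ := hA
  refine ⟨A, ⟨hA𝒞, hxA, fun B hB hxB hBA => ?_⟩, hAK⟩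
  exact hBA.antisymm (hmin ⟨hB, hxB, hBA.trans hAK⟩ hBA)

/-- A cover `𝒞` of a finite set `S` is unary (every `md(x)` is a singleton) iff
for all `K₁, K₂ ∈ 𝒞` and every `x ∈ K₁ ∩ K₂` there is `K ∈ 𝒞` with
`x ∈ K ⊆ K₁ ∩ K₂`. -/
theorem unary_cover_iff {S : Type*} [Finite S] (𝒞 : Set (Set S))
    (hcov : ⋃₀ 𝒞 = Set.univ) :
    (∀ x : S, ∃! A : Set S, A ∈ md 𝒞 x) ↔
      ∀ K₁ ∈ 𝒞, ∀ K₂ ∈ 𝒞, ∀ x ∈ K₁ ∩ K₂, ∃ K ∈ 𝒞, x ∈ K ∧ K ⊆ K₁ ∩ K₂ := by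
  constructor
  · intro h K₁ hK₁ K₂ hK₂ x ⟨hx₁, hx₂⟩
    obtain ⟨A, hA, huniq⟩ := h x
    obtain ⟨A₁, hA₁, hA₁K⟩ := exists_md_subset 𝒞 x hK₁ hx₁
    obtain ⟨A₂, hA₂, hA₂K⟩ := exists_md_subset 𝒞 x hK₂ hx₂
    have e₁ := huniq A₁ hA₁
    have e₂ := huniq A₂ hA₂
    exact ⟨A, hA.1, hA.2.1, Set.subset_inter (e₁ ▸ hA₁K) (e₂ ▸ hA₂K)⟩
  · intro h x
    have hxS : x ∈ ⋃₀ 𝒞 := hcov ▸ Set.mem_univ x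
    obtain ⟨K, hK, hxK⟩ := hxS
    obtain ⟨A, hA, _⟩ := exists_md_subset 𝒞 x hK hxK
    refine ⟨A, hA, fun B hB => ?_⟩
    obtain ⟨K', hK', hxK', hsub⟩ := h A hA.1 B hB.1 x ⟨hA.2.1, hB.2.1⟩
    have e₁ := hA.2.2 K' hK' hxK' (hsub.trans Set.inter_subset_left)
    have e₂ := hB.2.2 K' hK' hxK' (hsub.trans Set.inter_subset_right)
    rw [← e₁, ← e₂]
end

section
/- Let 𝒞 be a cover of a set S (finite or infinite). The operator u2+ defined by X^{u2+} = ⋃{Fr(x) : x ∈ X} is idempotent, i.e., (X^{u2+})^{u2+} = X^{u2+} for all X ⊆ S (equivalently, u2+ is a topological closure operator, since it is always extensive, monotone, preserves ∅ and unions), if and only if the family {Fr(x) : x ∈ S} is a partition of S, i.e., for all a, b ∈ S either Fr(a) = Fr(b) or Fr(a) ∩ Fr(b) = ∅. -/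
/-- The indiscernibility (friends) of `x`: the union of all members of the
cover containing `x`. -/
def Fr {S : Type*} (𝒞 : Set (Set S)) (x : S) : Set S :=
  ⋃₀ {K | K ∈ 𝒞 ∧ x ∈ K}

/-- The second-type upper approximation `X^{u2+} = ⋃{Fr(x) : x ∈ X}`. -/
def u2p {S : Type*} (𝒞 : Set (Set S)) (X : Set S) : Set S :=
  ⋃ x ∈ X, Fr 𝒞 x

/-- `u2+` is idempotent (equivalently, a topological closure operator) iff
`{Fr(x) : x ∈ S}` forms a partition of `S`. -/
theorem u2p_closure_iff_partition {S : Type*} (𝒞 : Set (Set S))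
    (hcov : ⋃₀ 𝒞 = Set.univ) :
    (∀ X : Set S, u2p 𝒞 (u2p 𝒞 X) = u2p 𝒞 X) ↔
      ∀ a b : S, Fr 𝒞 a = Fr 𝒞 b ∨ Fr 𝒞 a ∩ Fr 𝒞 b = ∅ := by
  have hself : ∀ x : S, x ∈ Fr 𝒞 x := by
    intro x
    have hx : x ∈ ⋃₀ 𝒞 := by rw [hcov]; trivial
    obtain ⟨K, hK, hxK⟩ := hx
    exact ⟨K, ⟨hK, hxK⟩, hxK⟩
  constructor
  · intro h a b
    by_cases hab : (Fr 𝒞 a ∩ Fr 𝒞 b) = ∅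
    · exact Or.inr hab
    left
    obtain ⟨z, hza, hzb⟩ := Set.nonempty_iff_ne_empty.mpr hab
    have key : ∀ x y : S, y ∈ Fr 𝒞 x → Fr 𝒞 y = Fr 𝒞 x := by
      intro x y hy
      have step : ∀ u v : S, v ∈ Fr 𝒞 u → Fr 𝒞 v ⊆ Fr 𝒞 u := by
        intro u v hv w hw
        have hmem : w ∈ u2p 𝒞 (u2p 𝒞 {u}) := by
          refine Set.mem_biUnion ?_ hw
          exact Set.mem_biUnion (Set.mem_singleton u) hv
        rw [h {u}] at hmem
        simpa [u2p] using hmem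
      have hxy : x ∈ Fr 𝒞 y := by
        obtain ⟨K, ⟨hK, hxK⟩, hyK⟩ := hy
        exact ⟨K, ⟨hK, hyK⟩, hxK⟩
      exact Set.Subset.antisymm (step x y hy) (step y x hxy)
    rw [← key a z hza, key b z hzb]
  · intro h X
    apply Set.Subset.antisymm
    · intro w hw
      simp only [u2p, Set.mem_iUnion] at hw ⊢
      obtain ⟨y, ⟨x, hxX, hy⟩, hw⟩ := hw
      refine ⟨x, hxX, ?_⟩
      have heq : Fr 𝒞 x = Fr 𝒞 y := by
        rcases h x y with heq | hdis
        · exact heq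
        · exact (Set.eq_empty_iff_forall_notMem.mp hdis y ⟨hy, hself y⟩).elim
      rw [heq]; exact hw
    · intro w hw
      simp only [u2p, Set.mem_iUnion] at hw ⊢
      obtain ⟨x, hxX, hw⟩ := hw
      exact ⟨x, ⟨x, hxX, hself x⟩, hw⟩
end

section
/- Let 𝒞 be a cover of a set S (finite or infinite). The operator u3+ defined by X^{u3+} = ⋃{cfr(x) : x ∈ X} is a topological closure operator — i.e., X ⊆ X^{u3+} and (X^{u3+})^{u3+} = X^{u3+} for all X ⊆ S (u3+ always preserves ∅ and unions and is monotone) — if and only if every x ∈ S is a representative element of cfr(x) for the cover {cfr(z) : z ∈ S}, that is: x ∈ cfr(x), and for all z ∈ S, x ∈ cfr(z) implies cfr(x) ⊆ cfr(z). -/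
/-- `cfr(x) = ⋃ md(x)`. -/
def cfr {S : Type*} (𝒞 : Set (Set S)) (x : S) : Set S := ⋃₀ md 𝒞 x

/-- The third-type upper approximation `X^{u3+} = ⋃{cfr(x) : x ∈ X}`. -/
def u3p {S : Type*} (𝒞 : Set (Set S)) (X : Set S) : Set S :=
  ⋃ x ∈ X, cfr 𝒞 x

/-- `u3+` is a topological closure operator (extensive and idempotent; it always
preserves `∅`, unions, and is monotone) iff every `x ∈ S` is a representative
element of `cfr(x)` for the cover `{cfr(z) : z ∈ S}`. -/
theorem u3p_closure_iff_representative {S : Type*} (𝒞 : Set (Set S))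
    (hcov : ⋃₀ 𝒞 = Set.univ) :
    (∀ X : Set S, X ⊆ u3p 𝒞 X ∧ u3p 𝒞 (u3p 𝒞 X) = u3p 𝒞 X) ↔
      ∀ x : S, x ∈ cfr 𝒞 x ∧ ∀ z : S, x ∈ cfr 𝒞 z → cfr 𝒞 x ⊆ cfr 𝒞 z := by
  have hsingle : ∀ x : S, u3p 𝒞 {x} = cfr 𝒞 x := by
    intro x; simp [u3p]
  constructor
  · intro h x
    constructor
    · have := (h {x}).1 rfl
      rwa [hsingle] at this
    · intro z hxz y hy
      have hidem := (h {z}).2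
      rw [hsingle] at hidem
      have : y ∈ u3p 𝒞 (cfr 𝒞 z) := by
        exact Set.mem_biUnion hxz hy
      rwa [hidem] at this
  · intro h X
    have hext : X ⊆ u3p 𝒞 X := by
      intro x hx
      exact Set.mem_biUnion hx (h x).1
    refine ⟨hext, Set.Subset.antisymm ?_ (by
      intro y hy; exact Set.mem_biUnion hy (h y).1)⟩
    intro y hy
    rcases Set.mem_iUnion₂.mp hy with ⟨x, hx, hyx⟩
    rcases Set.mem_iUnion₂.mp hx with ⟨z, hz, hxz⟩
    exact Set.mem_biUnion hz ((h x).2 z hxz hyx)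
end

section
/- Let T be a tolerance (reflexive, symmetric relation) on a set S, and let l_s, u_s, u_sb be the squeezed lower, upper, and bitten upper approximation operators. Then for every X ⊆ S, X^{u_sb} = ((Xᶜ)^{l_s})ᶜ; that is, the bitten upper approximation is the dual under complementation of the squeezed lower approximation. (Every element of S lies in some block, by Zorn's lemma from reflexivity of T.) -/
/-- A block of a tolerance `T`: a maximal subset `B` with `B × B ⊆ T`. -/
def IsBlock {S : Type*} (T : S → S → Prop) (B : Set S) : Prop :=
  (∀ a ∈ B, ∀ b ∈ B, T a b) ∧
    ∀ C : Set S, B ⊆ C → (∀ a ∈ C, ∀ b ∈ C, T a b) → C = B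

/-- Squeezed blocks: intersections of nonempty families of blocks. -/
def sqBlocks {S : Type*} (T : S → S → Prop) : Set (Set S) :=
  {A | ∃ Γ : Set (Set S), Γ.Nonempty ∧ (∀ B ∈ Γ, IsBlock T B) ∧ A = ⋂₀ Γ}

/-- The squeezed lower approximation. -/
def sqLower {S : Type*} (T : S → S → Prop) (X : Set S) : Set S :=
  ⋃₀ {A | A ∈ sqBlocks T ∧ A ⊆ X}

/-- The squeezed upper approximation. -/
def sqUpper {S : Type*} (T : S → S → Prop) (X : Set S) : Set S :=
  ⋃₀ {A | A ∈ sqBlocks T ∧ (A ∩ X).Nonempty}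

/-- The bitten upper approximation. -/
def sqBitten {S : Type*} (T : S → S → Prop) (X : Set S) : Set S :=
  sqUpper T X \ sqLower T Xᶜ

lemma exists_block_mem {S : Type*} (T : S → S → Prop) (hrefl : ∀ a, T a a)
    (x : S) : ∃ B, IsBlock T B ∧ x ∈ B := by
  obtain ⟨m, hxm, hmax⟩ := zorn_subset_nonempty
    {C : Set S | x ∈ C ∧ ∀ a ∈ C, ∀ b ∈ C, T a b}
    (fun c hc hchain ⟨c₀, hc₀⟩ => by
      refine ⟨⋃₀ c, ⟨Set.mem_sUnion.2 ⟨c₀, hc₀, (hc hc₀).1⟩, ?_⟩,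
        fun s hs => Set.subset_sUnion_of_mem hs⟩
      rintro a ⟨sa, hsa, ha⟩ b ⟨sb, hsb, hb⟩
      rcases hchain.total hsa hsb with h | h
      · exact (hc hsb).2 a (h ha) b hb
      · exact (hc hsa).2 a ha b (h hb))
    {x} ⟨rfl, fun a ha b hb => by simp only [Set.mem_singleton_iff] at ha hb; subst ha hb; exact hrefl _⟩
  refine ⟨m, ⟨hmax.prop.2, fun C hmC hC => hmax.eq_of_subset ⟨hmC hmax.prop.1, hC⟩ hmC |>.symm⟩,
    hmax.prop.1⟩

/-- For a tolerance `T`, the bitten upper approximation is the dual under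
complementation of the squeezed lower approximation: `X^{u_sb} = ((Xᶜ)^{l_s})ᶜ`. -/
theorem sqBitten_eq_compl_sqLower_compl {S : Type*} (T : S → S → Prop)
    (hrefl : ∀ a, T a a) (hsymm : ∀ a b, T a b → T b a) :
    ∀ X : Set S, sqBitten T X = (sqLower T Xᶜ)ᶜ := by
  intro X
  ext x
  simp only [sqBitten, Set.mem_diff, Set.mem_compl_iff]
  constructor
  · rintro ⟨_, h⟩; exact h
  · intro h
    refine ⟨?_, h⟩
    -- x ∈ sqUpper T X
    set Γ : Set (Set S) := {B | IsBlock T B ∧ x ∈ B}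
    obtain ⟨B, hB⟩ := exists_block_mem T hrefl x
    have hΓ : Γ.Nonempty := ⟨B, hB⟩
    have hxA : x ∈ ⋂₀ Γ := fun B hB => hB.2
    have hAsq : ⋂₀ Γ ∈ sqBlocks T := ⟨Γ, hΓ, fun B hB => hB.1, rfl⟩
    by_cases hsub : ⋂₀ Γ ⊆ Xᶜ
    · exact absurd ⟨⋂₀ Γ, ⟨hAsq, hsub⟩, hxA⟩ h
    · rw [Set.not_subset] at hsub
      obtain ⟨y, hyA, hyX⟩ := hsub
      exact ⟨⋂₀ Γ, ⟨hAsq, y, hyA, not_not.1 hyX⟩, hxA⟩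
end

section
/- Let T be a tolerance on a set S, 𝒯 its set of squeezed blocks and δ(S) the set of definable objects. For X, Z ∈ δ(S), define X → Z = ⋃{B ∈ 𝒯 : X ∩ B ⊆ Z}. Then X → Z ∈ δ(S), X ∩ (X → Z) ⊆ Z, and X → Z is the greatest such element of δ(S): for every Q ∈ δ(S), X ∩ Q ⊆ Z implies Q ⊆ X → Z. (This is the Heyting implication making δ(S) a Heyting algebra.) -/
/-- The definable objects: unions of families of squeezed blocks. -/
def defObj {S : Type*} (T : S → S → Prop) : Set (Set S) :=
  {U | ∃ H ⊆ sqBlocks T, U = ⋃₀ H}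

/-- For definable `X, Z`, the set `X → Z = ⋃{B ∈ 𝒯 : X ∩ B ⊆ Z}` is definable,
satisfies `X ∩ (X → Z) ⊆ Z`, and is the greatest definable set with this property:
the Heyting implication on `δ(S)`. -/
theorem defObj_heyting_implication {S : Type*} (T : S → S → Prop)
    (hrefl : ∀ a, T a a) (hsymm : ∀ a b, T a b → T b a)
    (X Z : Set S) (hX : X ∈ defObj T) (hZ : Z ∈ defObj T) :
    let imp : Set S := ⋃₀ {B | B ∈ sqBlocks T ∧ X ∩ B ⊆ Z}
    imp ∈ defObj T ∧ X ∩ imp ⊆ Z ∧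
    ∀ Q ∈ defObj T, X ∩ Q ⊆ Z → Q ⊆ imp := by
  intro imp
  refine ⟨⟨{B | B ∈ sqBlocks T ∧ X ∩ B ⊆ Z}, fun B hB => hB.1, rfl⟩, ?_, ?_⟩
  · rintro x ⟨hx, B, ⟨hB, hBZ⟩, hxB⟩
    exact hBZ ⟨hx, hxB⟩
  · rintro Q ⟨H, hH, rfl⟩ hQZ x ⟨B, hB, hxB⟩
    exact ⟨B, ⟨hH hB, fun y ⟨hy1, hy2⟩ => hQZ ⟨hy1, B, hB, hy2⟩⟩, hxB⟩
end
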